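/- For all integers n, N with 1 ≤ n < N, the following inequality holds: ∑_{t=1}^{n} 1/(N − t)² ≤ (n/(N − n)²)·(1 − (n − 1)/N). -/
import Mathlib


/-- for integers `1 ≤ n < N`,
`∑_{t=1}^{n} 1/(N − t)² ≤ (n/(N − n)²)(1 − (n − 1)/N)`. -/
theorem stmt13 (n N : ℕ) (hn : 1 ≤ n) (hnN : n < N) :
    ∑ t ∈ Finset.Icc 1 n, (1 : ℝ) / ((N : ℝ) - (t : ℝ)) ^ 2
      ≤ (n : ℝ) / ((N : ℝ) - (n : ℝ)) ^ 2 * (1 - ((n : ℝ) - 1) / (N : ℝ)) := by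
  induction n, hn using Nat.le_induction with
  | base =>
    simp only [Finset.Icc_self, Finset.sum_singleton, Nat.cast_one]
    rw [sub_self, zero_div, sub_zero, mul_one]
  | succ n hn ih =>
    have hnN' : n < N := Nat.lt_of_succ_lt hnN
    have hN2 : n + 2 ≤ N := hnN
    have hx : (0:ℝ) < (N:ℝ) := by exact_mod_cast Nat.pos_of_ne_zero (by omega)
    have hy : (1:ℝ) ≤ (n:ℝ) := by exact_mod_cast hn
    have hxy : (n:ℝ) + 2 ≤ (N:ℝ) := by exact_mod_cast hN2
    have h1 : (0:ℝ) < (N:ℝ) - (n:ℝ) := by linarith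
    have h2 : (0:ℝ) < (N:ℝ) - (n:ℝ) - 1 := by linarith
    rw [Finset.sum_Icc_succ_top (by omega : 1 ≤ n + 1)]
    have key : (n : ℝ) / ((N : ℝ) - (n : ℝ)) ^ 2 * (1 - ((n : ℝ) - 1) / (N : ℝ))
        + (1 : ℝ) / ((N : ℝ) - ((n:ℝ) + 1)) ^ 2
        ≤ ((n:ℝ) + 1) / ((N : ℝ) - ((n:ℝ) + 1)) ^ 2 * (1 - ((n:ℝ) + 1 - 1) / (N : ℝ)) := by
      rw [← sub_nonneg]
      have hident : ((n:ℝ) + 1) / ((N : ℝ) - ((n:ℝ) + 1)) ^ 2 * (1 - ((n:ℝ) + 1 - 1) / (N : ℝ))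
          - ((n : ℝ) / ((N : ℝ) - (n : ℝ)) ^ 2 * (1 - ((n : ℝ) - 1) / (N : ℝ))
            + (1 : ℝ) / ((N : ℝ) - ((n:ℝ) + 1)) ^ 2)
          = (n:ℝ) / ((N:ℝ) * ((N:ℝ) - (n:ℝ) - 1) * ((N:ℝ) - (n:ℝ))^2) := by
        have hx' : (N:ℝ) ≠ 0 := ne_of_gt hx
        have h1' : (N:ℝ) - (n:ℝ) ≠ 0 := ne_of_gt h1
        have h2' : (N:ℝ) - ((n:ℝ) + 1) ≠ 0 := by
          intro h; rw [← sub_sub] at h; exact (ne_of_gt h2) h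
        field_simp
        ring
      rw [hident]
      positivity
    calc ∑ t ∈ Finset.Icc 1 n, (1 : ℝ) / ((N : ℝ) - (t : ℝ)) ^ 2
          + (1:ℝ) / ((N:ℝ) - ((n+1 : ℕ):ℝ)) ^ 2
        ≤ (n : ℝ) / ((N : ℝ) - (n : ℝ)) ^ 2 * (1 - ((n : ℝ) - 1) / (N : ℝ))
          + (1:ℝ) / ((N:ℝ) - ((n:ℝ) + 1)) ^ 2 := by
          push_cast
          linarith [ih hnN']
      _ ≤ ((n:ℝ) + 1) / ((N : ℝ) - ((n:ℝ) + 1)) ^ 2 * (1 - ((n:ℝ) + 1 - 1) / (N : ℝ)) := key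
      _ = ((n+1 : ℕ):ℝ) / ((N : ℝ) - ((n+1:ℕ):ℝ)) ^ 2 * (1 - (((n+1:ℕ):ℝ) - 1) / (N : ℝ)) := by
          push_cast; ring
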